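/- Let f: R^d → R be self-concordant with Hessian H_x = ∇²f(x), and let W ∈ R^{d×d} be symmetric. For all y and all x with ‖y − x‖_y < 1/2, the weighted Frobenius norm satisfies ‖W‖_{F(H_y)} ≤ ((1 − ‖y − x‖_y)/(1 − 2‖y − x‖_y))² · ‖W‖_{F(H_x)}. -/

import Mathlib

open Matrix MeasureTheory Filter
open scoped Classical

noncomputable section

/-- Vectors in `ℝ^d` with the Euclidean (2-)norm. -/
abbrev Vec (d : ℕ) := EuclideanSpace ℝ (Fin d)

/-- Matrix square root of a positive semidefinite matrix (junk value `0` otherwise). -/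
noncomputable def msqrt {d : ℕ} (M : Matrix (Fin d) (Fin d) ℝ) : Matrix (Fin d) (Fin d) ℝ :=
  if h : M.PosSemidef then
    (h.1.eigenvectorUnitary : Matrix (Fin d) (Fin d) ℝ) *
      diagonal ((RCLike.ofReal : ℝ → ℝ) ∘ Real.sqrt ∘ h.1.eigenvalues) *
      (star h.1.eigenvectorUnitary : Matrix (Fin d) (Fin d) ℝ)
  else 0

/-- Frobenius norm of a square matrix. -/
noncomputable def frobNorm {d : ℕ} (M : Matrix (Fin d) (Fin d) ℝ) : ℝ :=
  Real.sqrt (Matrix.trace (Mᵀ * M))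

/-- Weighted Frobenius norm `‖W‖_{F(H)} = ‖H^{1/2} W H^{1/2}‖_F`. -/
noncomputable def wFrob {d : ℕ} (H W : Matrix (Fin d) (Fin d) ℝ) : ℝ :=
  frobNorm (msqrt H * W * msqrt H)

/-- Local norm `‖v‖_H = √⟨H v, v⟩`. -/
noncomputable def localNorm {d : ℕ} (H : Matrix (Fin d) (Fin d) ℝ) (v : Vec d) : ℝ :=
  Real.sqrt (inner ℝ (Matrix.toEuclideanLin H v) v : ℝ)

/-- `f` is self-concordant, expressed through its Hessian map `Hf`:
the Hessian is everywhere positive definite and the local norms at nearby points are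
comparable. -/
def SelfConcordant {d : ℕ} (Hf : Vec d → Matrix (Fin d) (Fin d) ℝ) : Prop :=
  (∀ x, (Hf x).PosDef) ∧
  ∀ x y v : Vec d, localNorm (Hf x) (y - x) < 1 → v ≠ 0 →
    1 - localNorm (Hf x) (y - x) ≤ localNorm (Hf y) v / localNorm (Hf x) v ∧
      localNorm (Hf y) v / localNorm (Hf x) v ≤ 1 / (1 - localNorm (Hf x) (y - x))

/-- `g` is the gradient of `f` and `Hf` is its Hessian (the derivative of the gradient). -/
def IsGradHess {d : ℕ} (f : Vec d → ℝ) (g : Vec d → Vec d)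
    (Hf : Vec d → Matrix (Fin d) (Fin d) ℝ) : Prop :=
  (∀ x, HasGradientAt f (g x) x) ∧
  ∀ x, HasFDerivAt g (Matrix.toEuclideanCLM (𝕜 := ℝ) (Hf x) : Vec d →L[ℝ] Vec d) x

/-- Smallest eigenvalue of a symmetric matrix, via the Rayleigh quotient. -/
noncomputable def lambdaMin {d : ℕ} (M : Matrix (Fin d) (Fin d) ℝ) : ℝ :=
  ⨅ v : {v : Vec d // ‖v‖ = 1}, (inner ℝ (Matrix.toEuclideanLin M v.1) v.1 : ℝ)

/-- Entrywise expectation of a random matrix. -/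
noncomputable def expMat {Ω : Type*} [MeasurableSpace Ω] (μ : Measure Ω)
    {m n : ℕ} (M : Ω → Matrix (Fin m) (Fin n) ℝ) : Matrix (Fin m) (Fin n) ℝ :=
  Matrix.of fun i j => ∫ ω, M ω i j ∂μ

/-- The projection matrix `Z = H^{1/2} S (Sᵀ H S)⁻¹ Sᵀ H^{1/2}`. -/
noncomputable def sketchProj {d τ : ℕ} (H : Matrix (Fin d) (Fin d) ℝ)
    (S : Matrix (Fin d) (Fin τ) ℝ) : Matrix (Fin d) (Fin d) ℝ :=
  msqrt H * S * (Sᵀ * H * S)⁻¹ * Sᵀ * msqrt H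

/-- The (randomized) BFGS update
`BFGS(B, H, S) = G + (I - G H) B (I - H G)` with `G = S (Sᵀ H S)⁻¹ Sᵀ`. -/
noncomputable def bfgsUpdate {d τ : ℕ} (B H : Matrix (Fin d) (Fin d) ℝ)
    (S : Matrix (Fin d) (Fin τ) ℝ) : Matrix (Fin d) (Fin d) ℝ :=
  S * (Sᵀ * H * S)⁻¹ * Sᵀ +
    (1 - S * (Sᵀ * H * S)⁻¹ * Sᵀ * H) * B * (1 - H * (S * (Sᵀ * H * S)⁻¹ * Sᵀ))

/-- Spectral (operator 2-)norm of a matrix. -/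
noncomputable def opNorm2 {d : ℕ} (M : Matrix (Fin d) (Fin d) ℝ) : ℝ :=
  ‖(Matrix.toEuclideanCLM (𝕜 := ℝ) M : Vec d →L[ℝ] Vec d)‖

instance matrixMeasurableSpace {m n : Type*} : MeasurableSpace (Matrix m n ℝ) :=
  MeasurableSpace.pi

/-- The sketching matrices `S k` are i.i.d. samples from a common distribution `D`. -/
def IIDSketch {d τ : ℕ} {Ω : Type*} [MeasurableSpace Ω] (μ : Measure Ω)
    (S : ℕ → Ω → Matrix (Fin d) (Fin τ) ℝ) : Prop :=
  (∀ k, Measurable (S k)) ∧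
  ProbabilityTheory.iIndepFun (m := fun _ => matrixMeasurableSpace) S μ ∧
  ∀ k, Measure.map (S k) μ = Measure.map (S 0) μ

end

section Aux
variable {d : ℕ}

lemma msqrt_spec {M : Matrix (Fin d) (Fin d) ℝ} (h : M.PosSemidef) :
    (msqrt M).PosSemidef ∧ msqrt M * msqrt M = M := by
  unfold msqrt
  rw [dif_pos h]
  set U : Matrix (Fin d) (Fin d) ℝ := (h.1.eigenvectorUnitary : Matrix (Fin d) (Fin d) ℝ) with hU
  have hUU : star U * U = 1 := Unitary.coe_star_mul_self _
  constructor
  · have hD : (diagonal ((RCLike.ofReal : ℝ → ℝ) ∘ Real.sqrt ∘ h.1.eigenvalues)).PosSemidef :=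
      PosSemidef.diagonal (fun i => by simp [Real.sqrt_nonneg])
    have := hD.mul_mul_conjTranspose_same U
    simpa [Matrix.star_eq_conjTranspose] using this
  · have hspec := h.1.spectral_theorem
    rw [Unitary.conjStarAlgAut_apply] at hspec
    conv_rhs => rw [hspec]
    rw [← hU]
    have e : U * diagonal ((RCLike.ofReal : ℝ → ℝ) ∘ Real.sqrt ∘ h.1.eigenvalues) * star U *
        (U * diagonal ((RCLike.ofReal : ℝ → ℝ) ∘ Real.sqrt ∘ h.1.eigenvalues) * star U)
        = U * (diagonal ((RCLike.ofReal : ℝ → ℝ) ∘ Real.sqrt ∘ h.1.eigenvalues) * (star U * U) *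
          diagonal ((RCLike.ofReal : ℝ → ℝ) ∘ Real.sqrt ∘ h.1.eigenvalues)) * star U := by
      simp only [Matrix.mul_assoc]
    rw [e, hUU, Matrix.mul_one, diagonal_mul_diagonal]
    congr 3
    funext i
    simp [Real.mul_self_sqrt (h.eigenvalues_nonneg i)]

lemma quad_eq (H : Matrix (Fin d) (Fin d) ℝ) (v : Vec d) :
    (inner ℝ (Matrix.toEuclideanLin H v) v : ℝ)
      = (WithLp.equiv 2 (Fin d → ℝ) v) ⬝ᵥ H *ᵥ (WithLp.equiv 2 (Fin d → ℝ) v) := by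
  simp [Matrix.toEuclideanLin_apply, PiLp.inner_apply, dotProduct, mulVec, mul_comm]

lemma psd_trace_nonneg {M : Matrix (Fin d) (Fin d) ℝ} (hM : M.PosSemidef) :
    0 ≤ M.trace := by
  rw [Matrix.trace]
  refine Finset.sum_nonneg fun i _ => ?_
  exact hM.diag_nonneg

lemma trace_mul_nonneg' {A B : Matrix (Fin d) (Fin d) ℝ}
    (hA : A.PosSemidef) (hB : B.PosSemidef) : 0 ≤ (A * B).trace := by
  have h1 : (A * B).trace = (msqrt A * B * msqrt A).trace := by
    conv_lhs => rw [← (msqrt_spec hA).2]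
    rw [mul_assoc, Matrix.trace_mul_comm]
  rw [h1]
  have := hB.mul_mul_conjTranspose_same (msqrt A)
  rw [(msqrt_spec hA).1.isHermitian.eq] at this
  exact psd_trace_nonneg this

lemma localNorm_neg (H : Matrix (Fin d) (Fin d) ℝ) (v : Vec d) :
    localNorm H (-v) = localNorm H v := by
  unfold localNorm
  rw [map_neg, inner_neg_neg]

lemma wFrob_eq {H W : Matrix (Fin d) (Fin d) ℝ} (hH : H.PosDef) (hW : W.IsSymm) :
    wFrob H W = Real.sqrt (((W * H * W) * H).trace) := by
  unfold wFrob frobNorm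
  set s := msqrt H with hs
  have hst : sᵀ = s := by
    have := (msqrt_spec hH.posSemidef).1.isHermitian.eq
    rw [Matrix.conjTranspose_eq_transpose_of_trivial] at this; exact this
  have hss : s * s = H := (msqrt_spec hH.posSemidef).2
  have ht : (s * W * s)ᵀ = s * W * s := by
    rw [Matrix.transpose_mul, Matrix.transpose_mul, hst, hW.eq, Matrix.mul_assoc]
  rw [ht]
  congr 1
  have h1 : (s * W * s) * (s * W * s) = s * (W * (H * (W * s))) := by
    rw [← hss]; simp only [Matrix.mul_assoc]
  rw [h1, Matrix.trace_mul_comm]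
  have h2 : (W * (H * (W * s))) * s = (W * H * W) * H := by
    rw [← hss]; simp only [Matrix.mul_assoc]
  rw [h2]

lemma trace_mono {A B P : Matrix (Fin d) (Fin d) ℝ} {c : ℝ}
    (hP : P.PosSemidef) (hAB : (c • B - A).PosSemidef) :
    (P * A).trace ≤ c * (P * B).trace := by
  have h0 := trace_mul_nonneg' hP hAB
  rw [Matrix.mul_sub, Matrix.trace_sub, Matrix.mul_smul, Matrix.trace_smul,
    smul_eq_mul] at h0
  linarith

end Aux

/-- **Change of metric in the weighted Frobenius norm, self-concordant case (backward).** -/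
theorem wfrob_change_of_norm_self_concordant'
    {d : ℕ} (f : Vec d → ℝ) (g : Vec d → Vec d) (Hf : Vec d → Matrix (Fin d) (Fin d) ℝ)
    (hfgH : IsGradHess f g Hf) (hsc : SelfConcordant Hf)
    (W : Matrix (Fin d) (Fin d) ℝ) (hW : W.IsSymm) :
    ∀ y x : Vec d, localNorm (Hf y) (y - x) < 1 / 2 →
      wFrob (Hf y) W ≤
        ((1 - localNorm (Hf y) (y - x)) / (1 - 2 * localNorm (Hf y) (y - x))) ^ 2 *
          wFrob (Hf x) W := by
  obtain ⟨hpd, hcomp⟩ := hsc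
  intro y x hrhalf
  set r := localNorm (Hf y) (y - x) with hrdef
  have hr0 : 0 ≤ r := Real.sqrt_nonneg _
  have h2r : 0 < 1 - 2 * r := by linarith
  have h1r : 0 < 1 - r := by linarith
  have hpow : 0 < (1 - r) ^ 2 := pow_pos h1r 2
  set c : ℝ := ((1 - r) ^ 2)⁻¹ with hcdef
  have hc0 : 0 ≤ c := inv_nonneg.mpr hpow.le
  -- quadratic form comparison
  have hq : ∀ u : Fin d → ℝ, u ⬝ᵥ (Hf y) *ᵥ u ≤ c * (u ⬝ᵥ (Hf x) *ᵥ u) := by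
    intro u
    by_cases hu : u = 0
    · simp [hu]
    · set v : Vec d := (WithLp.equiv 2 (Fin d → ℝ)).symm u with hv
      have hvu : (WithLp.equiv 2 (Fin d → ℝ)) v = u := by simp [hv]
      have hvne : v ≠ 0 := by
        simpa [hv] using (WithLp.equiv 2 (Fin d → ℝ)).symm.injective.ne hu
      have hxy : localNorm (Hf y) (x - y) = r := by
        rw [hrdef, ← localNorm_neg (Hf y) (y - x), neg_sub]
      have hkey := (hcomp y x v (by rw [hxy]; linarith) hvne).1
      rw [hxy] at hkey
      set qy : ℝ := (inner ℝ (Matrix.toEuclideanLin (Hf y) v) v : ℝ) with hqy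
      set qx : ℝ := (inner ℝ (Matrix.toEuclideanLin (Hf x) v) v : ℝ) with hqx
      have hqyu : qy = u ⬝ᵥ (Hf y) *ᵥ u := by rw [hqy, quad_eq, hvu]
      have hqxu : qx = u ⬝ᵥ (Hf x) *ᵥ u := by rw [hqx, quad_eq, hvu]
      have hqypos : 0 < qy := by
        have := (hpd y).dotProduct_mulVec_pos hu
        simpa [hqyu] using this
      have hqxnn : 0 ≤ qx := by
        have := (hpd x).posSemidef.dotProduct_mulVec_nonneg u
        simpa [hqxu] using this
      have hny : 0 < localNorm (Hf y) v := Real.sqrt_pos.mpr hqypos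
      have h1 : (1 - r) * localNorm (Hf y) v ≤ localNorm (Hf x) v := by
        rw [le_div_iff₀ hny] at hkey
        exact hkey
      have h2 : ((1 - r) * localNorm (Hf y) v) ^ 2 ≤ (localNorm (Hf x) v) ^ 2 :=
        pow_le_pow_left₀ (mul_nonneg h1r.le hny.le) h1 2
      have hsy : (localNorm (Hf y) v) ^ 2 = qy := Real.sq_sqrt hqypos.le
      have hsx : (localNorm (Hf x) v) ^ 2 = qx := Real.sq_sqrt hqxnn
      rw [mul_pow, hsy, hsx] at h2
      -- (1-r)^2 * qy ≤ qx  ⟹  qy ≤ c * qx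
      have h3 := mul_le_mul_of_nonneg_left h2 hc0
      rw [← mul_assoc, hcdef, inv_mul_cancel₀ hpow.ne', one_mul] at h3
      rw [← hqyu, ← hqxu]
      exact h3
  -- matrix inequality
  have hpsd : (c • Hf x - Hf y).PosSemidef := by
    refine Matrix.PosSemidef.of_dotProduct_mulVec_nonneg ?_ ?_
    · have h1 : (c • Hf x).IsHermitian := by
        show (c • Hf x)ᴴ = c • Hf x
        rw [Matrix.conjTranspose_smul, (hpd x).1.eq, star_trivial]
      exact h1.sub (hpd y).1
    · intro u
      have := hq u
      simp only [Matrix.sub_mulVec, Matrix.smul_mulVec, dotProduct_sub,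
        dotProduct_smul, smul_eq_mul, star_trivial]
      linarith
  have hWHyW : (W * Hf y * W).PosSemidef := by
    have := (hpd y).posSemidef.mul_mul_conjTranspose_same W
    rwa [show Wᴴ = W by rw [Matrix.conjTranspose_eq_transpose_of_trivial]; exact hW.eq] at this
  have hWHxW : (W * Hf x * W).PosSemidef := by
    have := (hpd x).posSemidef.mul_mul_conjTranspose_same W
    rwa [show Wᴴ = W by rw [Matrix.conjTranspose_eq_transpose_of_trivial]; exact hW.eq] at this
  set Ty : ℝ := ((W * Hf y * W) * Hf y).trace with hTy
  set Tx : ℝ := ((W * Hf x * W) * Hf x).trace with hTx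
  have hTxnn : 0 ≤ Tx := trace_mul_nonneg' hWHxW (hpd x).posSemidef
  have step1 : Ty ≤ c * ((W * Hf y * W) * Hf x).trace := trace_mono hWHyW hpsd
  have step2 : ((W * Hf y * W) * Hf x).trace = ((W * Hf x * W) * Hf y).trace := by
    have e1 : (W * Hf y * W) * Hf x = (W * Hf y) * (W * Hf x) := by
      simp only [Matrix.mul_assoc]
    have e2 : (W * Hf x * W) * Hf y = (W * Hf x) * (W * Hf y) := by
      simp only [Matrix.mul_assoc]
    rw [e1, e2, Matrix.trace_mul_comm]
  have step3 : ((W * Hf x * W) * Hf y).trace ≤ c * Tx := trace_mono hWHxW hpsd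
  have hTyTx : Ty ≤ c ^ 2 * Tx := by
    calc Ty ≤ c * ((W * Hf x * W) * Hf y).trace := by rwa [step2] at step1
    _ ≤ c * (c * Tx) := by exact mul_le_mul_of_nonneg_left step3 hc0
    _ = c ^ 2 * Tx := by ring
  -- pass to wFrob
  rw [wFrob_eq (hpd y) hW, wFrob_eq (hpd x) hW]
  have hsqrt : Real.sqrt Ty ≤ Real.sqrt (c ^ 2 * Tx) := Real.sqrt_le_sqrt hTyTx
  have hsq2 : Real.sqrt (c ^ 2 * Tx) = c * Real.sqrt Tx := by
    rw [Real.sqrt_mul (sq_nonneg c), Real.sqrt_sq hc0]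
  have hcle : c ≤ ((1 - r) / (1 - 2 * r)) ^ 2 := by
    rw [div_pow, le_div_iff₀ (pow_pos h2r 2), hcdef, inv_mul_le_iff₀ hpow]
    nlinarith [mul_self_le_mul_self h2r.le (by nlinarith : (1 - 2 * r) ≤ (1 - r) ^ 2)]
  calc Real.sqrt Ty ≤ c * Real.sqrt Tx := by rw [← hsq2]; exact hsqrt
  _ ≤ ((1 - r) / (1 - 2 * r)) ^ 2 * Real.sqrt Tx :=
      mul_le_mul_of_nonneg_right hcle (Real.sqrt_nonneg _)
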